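/- If a sequence (U_n)_{n≥1} of positive integers is realizable (i.e., there exists a set X and a map T : X → X with U_n = #{x ∈ X : T^n(x) = x} for all n ≥ 1), then for every prime p and every k ≥ 1, U_{p^k} ≡ U_{p^{k−1}} (mod p^k). -/

import Mathlib

/-- A sequence of positive integers is realizable if it counts the periodic
points of the iterates of some map. -/
def Realizable (U : ℕ → ℕ) : Prop :=
  ∃ (X : Type) (T : X → X), ∀ n : ℕ, 1 ≤ n →
    ∃ s : Finset X, (∀ x : X, T^[n] x = x ↔ x ∈ s) ∧ s.card = U n

open Function Finset

/-- Key counting lemma: if `s` is exactly the set of points of minimal period `n`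
(for a map `T`), then `n` divides the cardinality of `s`. -/
lemma card_dvd_of_minimalPeriod_eq {X : Type} [DecidableEq X] (T : X → X) (n : ℕ)
    (hn : 0 < n) (s : Finset X)
    (hs : ∀ x, x ∈ s ↔ Function.minimalPeriod T x = n) : n ∣ s.card := by
  classical
  set orb : X → Finset X := fun x => (Finset.range n).image (fun i => T^[i] x) with horb
  have hper : ∀ x ∈ s, x ∈ periodicPts T := by
    intro x hx
    rw [← minimalPeriod_pos_iff_mem_periodicPts, (hs x).1 hx]
    exact hn
  have hcard_orb : ∀ x ∈ s, (orb x).card = n := by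
    intro x hx
    rw [horb]
    rw [Finset.card_image_of_injOn, Finset.card_range]
    intro a ha b hb hab
    have := Function.iterate_injOn_Iio_minimalPeriod (f := T) (x := x)
      (by simpa [(hs x).1 hx] using Finset.mem_range.1 ha)
      (by simpa [(hs x).1 hx] using Finset.mem_range.1 hb) hab
    exact this
  have hmem_self : ∀ x, x ∈ orb x := by
    intro x
    rw [horb]
    exact Finset.mem_image.2 ⟨0, Finset.mem_range.2 hn, rfl⟩
  have hmem_s : ∀ x ∈ s, ∀ i, T^[i] x ∈ s := by
    intro x hx i
    rw [hs]
    rw [minimalPeriod_apply_iterate (hper x hx) i]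
    exact (hs x).1 hx
  have horb_eq : ∀ x ∈ s, ∀ i, orb (T^[i] x) = orb x := by
    intro x hx i
    have hsub : orb (T^[i] x) ⊆ orb x := by
      intro y hy
      rw [horb] at hy ⊢
      obtain ⟨j, hj, rfl⟩ := Finset.mem_image.1 hy
      rw [← Function.iterate_add_apply]
      rw [← Function.iterate_mod_minimalPeriod_eq (n := j + i)]
      refine Finset.mem_image.2 ⟨(j + i) % minimalPeriod T x, ?_, rfl⟩
      refine Finset.mem_range.2 ?_
      rw [(hs x).1 hx]
      exact Nat.mod_lt _ hn
    have h1 : (orb (T^[i] x)).card = n := hcard_orb _ (hmem_s x hx i)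
    have h2 : (orb x).card = n := hcard_orb x hx
    exact Finset.eq_of_subset_of_card_le hsub (by rw [h1, h2])
  -- partition s into orbits
  set t := s.image orb with ht
  have hfib : ∀ x ∈ s, orb x ∈ t := fun x hx => Finset.mem_image_of_mem _ hx
  have hsum := Finset.card_eq_sum_card_fiberwise hfib
  rw [hsum]
  refine Finset.dvd_sum ?_
  intro o ho
  obtain ⟨x₀, hx₀, rfl⟩ := Finset.mem_image.1 ho
  have hfil : s.filter (fun x => orb x = orb x₀) = orb x₀ := by
    apply Finset.ext
    intro y
    constructor
    · intro hy
      obtain ⟨hy1, hy2⟩ := Finset.mem_filter.1 hy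
      rw [← hy2]; exact hmem_self y
    · intro hy
      rw [horb] at hy
      obtain ⟨i, hi, rfl⟩ := Finset.mem_image.1 hy
      exact Finset.mem_filter.2 ⟨hmem_s x₀ hx₀ i, horb_eq x₀ hx₀ i⟩
  rw [hfil, hcard_orb x₀ hx₀]

theorem realizable_prime_power_congruence (U : ℕ → ℕ)
    (hpos : ∀ n : ℕ, 1 ≤ n → 0 < U n) (hreal : Realizable U) :
    ∀ p : ℕ, p.Prime → ∀ k : ℕ, 1 ≤ k →
      (U (p ^ k) : ℤ) ≡ (U (p ^ (k - 1)) : ℤ) [ZMOD (p ^ k)] := by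
  intro p hp k hk
  obtain ⟨X, T, hT⟩ := hreal
  classical
  have hp1 : 1 < p := hp.one_lt
  have hpk_pos : 0 < p ^ k := Nat.pow_pos hp.pos
  have hpk1_pos : 0 < p ^ (k - 1) := Nat.pow_pos hp.pos
  obtain ⟨sk, hsk, hskc⟩ := hT (p ^ k) hpk_pos
  obtain ⟨skm, hskm, hskmc⟩ := hT (p ^ (k - 1)) hpk1_pos
  -- skm ⊆ sk
  have hdvd : p ^ (k - 1) ∣ p ^ k := pow_dvd_pow p (Nat.sub_le k 1)
  have hndvd : ¬ (p ^ k ∣ p ^ (k - 1)) := by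
    intro h
    have := Nat.le_of_dvd hpk1_pos h
    have hlt : p ^ (k - 1) < p ^ k :=
      Nat.pow_lt_pow_right hp1 (Nat.sub_lt (Nat.lt_of_lt_of_le Nat.zero_lt_one hk) Nat.zero_lt_one)
    omega
  have hsub : skm ⊆ sk := by
    intro x hx
    rw [← hsk]
    have hxp : Function.IsPeriodicPt T (p ^ (k - 1)) x := (hskm x).2 hx
    exact (Function.isPeriodicPt_iff_minimalPeriod_dvd.2
      (dvd_trans hxp.minimalPeriod_dvd hdvd))
  -- characterize sk \ skm
  have hchar : ∀ x, x ∈ sk \ skm ↔ Function.minimalPeriod T x = p ^ k := by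
    intro x
    constructor
    · rintro hx
      obtain ⟨hx1, hx2⟩ := Finset.mem_sdiff.1 hx
      have hxp : Function.IsPeriodicPt T (p ^ k) x := (hsk x).2 hx1
      have hd : Function.minimalPeriod T x ∣ p ^ k := hxp.minimalPeriod_dvd
      obtain ⟨j, hj, hje⟩ := (Nat.dvd_prime_pow hp).1 hd
      by_cases hjk : j = k
      · rw [hje, hjk]
      · exfalso
        apply hx2
        rw [← hskm]
        refine Function.isPeriodicPt_iff_minimalPeriod_dvd.2 ?_
        rw [hje]
        exact pow_dvd_pow p (by omega)
    · intro hmx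
      refine Finset.mem_sdiff.2 ⟨?_, ?_⟩
      · rw [← hsk]
        refine Function.isPeriodicPt_iff_minimalPeriod_dvd.2 ?_
        rw [hmx]
      · rw [← hskm]
        intro hcon
        have := Function.isPeriodicPt_iff_minimalPeriod_dvd.1 hcon
        rw [hmx] at this
        exact hndvd this
  have hdvd_card : p ^ k ∣ (sk \ skm).card :=
    card_dvd_of_minimalPeriod_eq T (p ^ k) hpk_pos (sk \ skm) hchar
  have hcard_eq : (sk \ skm).card = sk.card - skm.card := Finset.card_sdiff_of_subset hsub
  have hle : skm.card ≤ sk.card := Finset.card_le_card hsub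
  have hdiv : ((p ^ k : ℕ) : ℤ) ∣ ((U (p ^ k) : ℤ) - (U (p ^ (k - 1)) : ℤ)) := by
    rw [← hskc, ← hskmc]
    have heq : ((sk.card : ℤ) - (skm.card : ℤ)) = ((sk \ skm).card : ℤ) := by
      rw [hcard_eq]
      push_cast [Nat.cast_sub hle]
      ring
    rw [heq]
    exact_mod_cast Int.natCast_dvd_natCast.2 hdvd_card
  exact Int.ModEq.symm (Int.modEq_iff_dvd.2 (by simpa using hdiv))
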